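/- Let G be a finite group and A a group acting on G via automorphisms. Then for every i ≥ 1, γ_{i+1}(G,A) is generated by the subgroups [γ_i(G,A), A, G, ..., G] (with n copies of G, n ≥ 0), i.e., γ_{i+1}(G,A) = ⟨[γ_i(G,A), A, _n G] : n ≥ 0⟩. -/

import Mathlib

open SemidirectProduct
open scoped commutatorElement

/-- Left-normed commutator `[x, l₁, l₂, …]`. -/
def lnc {S : Type*} [Group S] (x : S) (l : List S) : S :=
  l.foldl (fun c y => ⁅c, y⁆) x

/-- `γ_k(G,A)`: the subgroup of the semidirect product `G ⋊[φ] A` generated by all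
left-normed commutators `[x₁,…,xₙ]` with `n ≥ k`, `x₁ ∈ G`, each `xᵢ ∈ G ∪ A`,
and at least `k-1` of the `xᵢ` in `A`. -/
def gammaGA {G A : Type*} [Group G] [Group A] (φ : A →* MulAut G) (k : ℕ) :
    Subgroup (G ⋊[φ] A) :=
  Subgroup.closure {x | ∃ (g : G) (l : List (G ⋊[φ] A)),
      k ≤ l.length + 1 ∧
      (∀ y ∈ l, (∃ h : G, y = inl h) ∨ (∃ a : A, y = inr a)) ∧
      (∃ s : Finset (Fin l.length), k - 1 ≤ s.card ∧
        ∀ i ∈ s, ∃ a : A, l.get i = inr a) ∧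
      x = lnc (inl g) l}

section Aux

lemma lnc_cons {S : Type*} [Group S] (x y : S) (l : List S) :
    lnc x (y :: l) = lnc ⁅x, y⁆ l := rfl

lemma lnc_append {S : Type*} [Group S] (x : S) (l₁ l₂ : List S) :
    lnc x (l₁ ++ l₂) = lnc (lnc x l₁) l₂ :=
  List.foldl_append

lemma lnc_mem_of_normal {S : Type*} [Group S] {N : Subgroup S} (hN : N.Normal)
    {x : S} (hx : x ∈ N) (l : List S) : lnc x l ∈ N := by
  induction l generalizing x with
  | nil => exact hx
  | cons y l ih =>
    rw [lnc_cons]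
    apply ih
    have h : ⁅x, y⁆ = x * (y * x⁻¹ * y⁻¹) := by group
    rw [h]
    exact mul_mem hx (hN.conj_mem _ (inv_mem hx) y)

variable {G A : Type*} [Group G] [Group A] (φ : A →* MulAut G)

/-- The generating set of `gammaGA`. -/
def gset (k : ℕ) : Set (G ⋊[φ] A) :=
  {x | ∃ (g : G) (l : List (G ⋊[φ] A)),
      k ≤ l.length + 1 ∧
      (∀ y ∈ l, (∃ h : G, y = inl h) ∨ (∃ a : A, y = inr a)) ∧
      (∃ s : Finset (Fin l.length), k - 1 ≤ s.card ∧
        ∀ i ∈ s, ∃ a : A, l.get i = inr a) ∧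
      x = lnc (inl g) l}

lemma gammaGA_eq (k : ℕ) : gammaGA φ k = Subgroup.closure (gset φ k) := rfl

variable {φ}

lemma gset_comm_mem {k : ℕ} {x y : G ⋊[φ] A} (hx : x ∈ gset φ k)
    (hy : (∃ h : G, y = inl h) ∨ (∃ a : A, y = inr a)) : ⁅x, y⁆ ∈ gset φ k := by
  obtain ⟨g, l, hlen, hmem, ⟨s, hcard, hA⟩, rfl⟩ := hx
  refine ⟨g, l ++ [y], by simp; omega, ?_, ⟨s.map (Fin.castLEEmb (by simp)), ?_, ?_⟩, ?_⟩
  · intro z hz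
    rcases List.mem_append.mp hz with h | h
    · exact hmem z h
    · simp at h; subst h; exact hy
  · simpa using hcard
  · rintro t ht
    simp only [Finset.mem_map] at ht
    obtain ⟨u, hu, rfl⟩ := ht
    obtain ⟨a, ha⟩ := hA u hu
    refine ⟨a, ?_⟩
    simp only [List.get_eq_getElem] at ha ⊢
    exact (List.getElem_append_left u.2).trans ha
  · rw [lnc_append]; rfl

lemma gset_comm_inr {k : ℕ} {x : G ⋊[φ] A} (hx : x ∈ gset φ k) (a : A) :
    ⁅x, inr a⁆ ∈ gset φ (k + 1) := by
  obtain ⟨g, l, hlen, hmem, ⟨s, hcard, hA⟩, rfl⟩ := hx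
  have hlast : l.length < (l ++ [(inr a : G ⋊[φ] A)]).length := by simp
  refine ⟨g, l ++ [inr a], by simp; omega, ?_,
    ⟨insert ⟨l.length, hlast⟩ (s.map (Fin.castLEEmb (by simp))), ?_, ?_⟩, ?_⟩
  · intro z hz
    rcases List.mem_append.mp hz with h | h
    · exact hmem z h
    · simp at h; subst h; exact Or.inr ⟨a, rfl⟩
  · have hnot : (⟨l.length, hlast⟩ : Fin (l ++ [(inr a : G ⋊[φ] A)]).length) ∉
        s.map (Fin.castLEEmb (by simp)) := by
      simp only [Finset.mem_map, not_exists]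
      rintro u ⟨hu, h⟩
      have := congrArg Fin.val h
      simp only [Fin.castLEEmb_apply, Fin.coe_castLE] at this
      exact absurd this (Nat.ne_of_lt u.2)
    rw [Finset.card_insert_of_notMem hnot, Finset.card_map]
    omega
  · rintro t ht
    rcases Finset.mem_insert.mp ht with h | h
    · subst h
      exact ⟨a, by simp⟩
    · simp only [Finset.mem_map] at h
      obtain ⟨u, hu, rfl⟩ := h
      obtain ⟨b, hb⟩ := hA u hu
      refine ⟨b, ?_⟩
      simp only [List.get_eq_getElem] at hb ⊢
      exact (List.getElem_append_left u.2).trans hb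
  · rw [lnc_append]; rfl

lemma comm_mem_gammaGA {k : ℕ} {x : G ⋊[φ] A} (hx : x ∈ gammaGA φ k)
    {y : G ⋊[φ] A} (hy : (∃ h : G, y = inl h) ∨ (∃ a : A, y = inr a)) :
    ⁅x, y⁆ ∈ gammaGA φ k := by
  rw [gammaGA_eq] at hx
  induction hx using Subgroup.closure_induction with
  | mem c hc => exact Subgroup.subset_closure (gset_comm_mem hc hy)
  | one =>
    have h : ⁅(1 : G ⋊[φ] A), y⁆ = 1 := by group
    rw [h]; exact one_mem _
  | mul u v hu hv ihu ihv =>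
    have h : ⁅u * v, y⁆ = u * ⁅v, y⁆ * u⁻¹ * ⁅u, y⁆ := by group
    rw [h]
    exact mul_mem (mul_mem (mul_mem hu ihv) (inv_mem hu)) ihu
  | inv u hu ih =>
    have h : ⁅u⁻¹, y⁆ = u⁻¹ * ⁅u, y⁆⁻¹ * u := by group
    rw [h]
    exact mul_mem (mul_mem (inv_mem hu) (inv_mem ih)) hu

lemma gammaGA_normal (k : ℕ) : (gammaGA φ k).Normal := by
  have key : ∀ y : G ⋊[φ] A, ((∃ h : G, y = inl h) ∨ (∃ a : A, y = inr a)) →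
      ∀ n ∈ gammaGA φ k, y * n * y⁻¹ ∈ gammaGA φ k := by
    intro y hy n hn
    have h : y * n * y⁻¹ = n * ⁅n⁻¹, y⁆ := by group
    rw [h]
    exact mul_mem hn (comm_mem_gammaGA (inv_mem hn) hy)
  constructor
  intro n hn g
  have hdec : g * n * g⁻¹ =
      inl g.left * (inr g.right * n * (inr g.right)⁻¹) * (inl g.left)⁻¹ := by
    conv_lhs => rw [← inl_left_mul_inr_right g]
    group
  rw [hdec]
  exact key _ (Or.inl ⟨_, rfl⟩) _ (key _ (Or.inr ⟨_, rfl⟩) _ hn)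

lemma comm_inr_succ {k : ℕ} {x : G ⋊[φ] A} (hx : x ∈ gammaGA φ k) (a : A) :
    ⁅x, inr a⁆ ∈ gammaGA φ (k + 1) := by
  have N := gammaGA_normal (φ := φ) (k + 1)
  rw [gammaGA_eq] at hx
  induction hx using Subgroup.closure_induction with
  | mem c hc => exact Subgroup.subset_closure (gset_comm_inr hc a)
  | one =>
    have h : ⁅(1 : G ⋊[φ] A), (inr a : G ⋊[φ] A)⁆ = 1 := by group
    rw [h]; exact one_mem _
  | mul u v hu hv ihu ihv =>
    have h : ⁅u * v, (inr a : G ⋊[φ] A)⁆ =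
        u * ⁅v, (inr a : G ⋊[φ] A)⁆ * u⁻¹ * ⁅u, (inr a : G ⋊[φ] A)⁆ := by group
    rw [h]
    exact mul_mem (N.conj_mem _ ihv u) ihu
  | inv u hu ih =>
    have h : ⁅u⁻¹, (inr a : G ⋊[φ] A)⁆ = u⁻¹ * ⁅u, (inr a : G ⋊[φ] A)⁆⁻¹ * (u⁻¹)⁻¹ := by
      group
    rw [h]
    exact N.conj_mem _ (inv_mem ih) u⁻¹

lemma map_conj_of_normal {S : Type*} [Group S] {H : Subgroup S} (hH : H.Normal) (g : S) :
    H.map (MulAut.conj g).toMonoidHom = H := by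
  apply le_antisymm
  · rintro _ ⟨x, hx, rfl⟩
    simpa using hH.conj_mem x hx g
  · intro x hx
    refine ⟨g⁻¹ * x * g, ?_, by simp [MulAut.conj_apply]; group⟩
    simpa using hH.conj_mem x hx g⁻¹

lemma main_aux {φ : A →* MulAut G} (i : ℕ) (hi : 1 ≤ i) (K : ℕ → Subgroup (G ⋊[φ] A))
    (hK0 : K 0 = ⁅gammaGA φ i, (⊤ : Subgroup A).map (inr : A →* G ⋊[φ] A)⁆)
    (hKs : ∀ n, K (n + 1) = ⁅K n, (⊤ : Subgroup G).map (inl : G →* G ⋊[φ] A)⁆) :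
    gammaGA φ (i + 1) = ⨆ n, K n := by
  classical
  set N := ⨆ n, K n with hN
  have hKle : ∀ n, K n ≤ N := fun n => le_iSup K n
  have hGstar : ∀ g : G, (inl g : G ⋊[φ] A) ∈ (⊤ : Subgroup G).map (inl : G →* G ⋊[φ] A) :=
    fun g => ⟨g, trivial, rfl⟩
  have hAstar : ∀ a : A, (inr a : G ⋊[φ] A) ∈ (⊤ : Subgroup A).map (inr : A →* G ⋊[φ] A) :=
    fun a => ⟨a, trivial, rfl⟩
  -- conjugation by inr a fixes each K n
  have hconjA : ∀ (a : A) (n : ℕ),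
      (K n).map (MulAut.conj (inr a : G ⋊[φ] A)).toMonoidHom = K n := by
    intro a n
    have hGmap : ((⊤ : Subgroup G).map (inl : G →* G ⋊[φ] A)).map
        (MulAut.conj (inr a : G ⋊[φ] A)).toMonoidHom
        = (⊤ : Subgroup G).map (inl : G →* G ⋊[φ] A) := by
      rw [Subgroup.map_map]
      have hcomp : (MulAut.conj (inr a : G ⋊[φ] A)).toMonoidHom.comp (inl : G →* G ⋊[φ] A)
          = (inl : G →* G ⋊[φ] A).comp (φ a).toMonoidHom := by
        refine MonoidHom.ext fun n => ?_
        show (MulAut.conj (inr a : G ⋊[φ] A)) (inl n) = inl (φ a n)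
        rw [MulAut.conj_apply, inl_aut, map_inv]
      rw [hcomp, ← Subgroup.map_map]
      congr 1
      exact Subgroup.map_top_of_surjective _ (φ a).surjective
    induction n with
    | zero =>
      rw [hK0, Subgroup.map_commutator]
      congr 1
      · exact map_conj_of_normal (gammaGA_normal i) _
      · rw [Subgroup.map_map]
        have hcomp : (MulAut.conj (inr a : G ⋊[φ] A)).toMonoidHom.comp (inr : A →* G ⋊[φ] A)
            = (inr : A →* G ⋊[φ] A).comp (MulAut.conj a).toMonoidHom := by
          refine MonoidHom.ext fun b => ?_
          show (MulAut.conj (inr a : G ⋊[φ] A)) (inr b) = inr (MulAut.conj a b)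
          rw [MulAut.conj_apply, MulAut.conj_apply, map_mul, map_mul, map_inv]
        rw [hcomp, ← Subgroup.map_map]
        congr 1
        exact Subgroup.map_top_of_surjective _ (MulAut.conj a).surjective
    | succ n ih =>
      rw [hKs, Subgroup.map_commutator, ih, hGmap]
  have hNnormal : N.Normal := by
    have key : ∀ n : ℕ, ∀ x ∈ K n, ∀ g : G ⋊[φ] A, g * x * g⁻¹ ∈ N := by
      intro n x hx g
      have hA : ∀ (a : A) (z : G ⋊[φ] A), z ∈ K n → inr a * z * (inr a)⁻¹ ∈ K n := by
        intro a z hz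
        have : (MulAut.conj (inr a : G ⋊[φ] A)) z ∈
            (K n).map (MulAut.conj (inr a : G ⋊[φ] A)).toMonoidHom :=
          Subgroup.mem_map_of_mem _ hz
        rw [hconjA a n] at this
        simpa [MulAut.conj_apply] using this
      have hG : ∀ (h : G) (z : G ⋊[φ] A), z ∈ K n → inl h * z * (inl h)⁻¹ ∈ N := by
        intro h z hz
        have hcomm : inl h * z * (inl h)⁻¹ = z * ⁅z⁻¹, (inl h : G ⋊[φ] A)⁆ := by group
        rw [hcomm]
        refine mul_mem (hKle n hz) (hKle (n + 1) ?_)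
        rw [hKs]
        exact Subgroup.commutator_mem_commutator (inv_mem hz) (hGstar h)
      have hdec : g * x * g⁻¹ =
          inl g.left * (inr g.right * x * (inr g.right)⁻¹) * (inl g.left)⁻¹ := by
        conv_lhs => rw [← inl_left_mul_inr_right g]
        group
      rw [hdec]
      exact hG _ _ (hA _ _ hx)
    constructor
    intro x hx g
    refine Subgroup.iSup_induction K (C := fun z => ∀ g : G ⋊[φ] A, g * z * g⁻¹ ∈ N) hx
      (fun n z hz => key n z hz) (fun g => by simpa using one_mem N) ?_ g
    intro u v hu hv g
    have h : g * (u * v) * g⁻¹ = (g * u * g⁻¹) * (g * v * g⁻¹) := by group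
    rw [h]
    exact mul_mem (hu g) (hv g)
  apply le_antisymm
  · -- hard direction
    rw [gammaGA_eq]
    refine (Subgroup.closure_le _).mpr ?_
    rintro x ⟨g, l, hlen, hmem, ⟨s, hcard, hA⟩, rfl⟩
    rw [Nat.add_sub_cancel] at hcard
    have hs : s.Nonempty := Finset.card_pos.mp (lt_of_lt_of_le hi hcard)
    set j := s.max' hs with hj
    have hjs : j ∈ s := s.max'_mem hs
    obtain ⟨a, hja⟩ := hA j hjs
    have hjlen : (j : ℕ) < l.length := j.2
    have hl₁len : (l.take (j : ℕ)).length = (j : ℕ) := by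
      rw [List.length_take]; omega
    set s' : Finset (Fin (l.take (j : ℕ)).length) :=
      Finset.univ.filter (fun t => ∃ b : A, (l.take (j : ℕ)).get t = inr b) with hs'
    have hs'card : i - 1 ≤ s'.card := by
      have hle : (l.take (j : ℕ)).length ≤ l.length := by omega
      have hsurj : Set.SurjOn (Fin.castLE hle) (↑s') (↑(s.erase j)) := by
        intro t ht
        simp only [Finset.coe_erase, Set.mem_diff, Finset.mem_coe, Set.mem_singleton_iff] at ht
        obtain ⟨hts, htj⟩ := ht
        have htlt : (t : ℕ) < (j : ℕ) :=
          lt_of_le_of_ne (s.le_max' t hts) (fun h => htj (Fin.ext h))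
        refine ⟨⟨(t : ℕ), by omega⟩, ?_, by ext; simp⟩
        simp only [hs', Finset.coe_filter, Set.mem_setOf_eq, Finset.mem_univ, true_and]
        obtain ⟨b, hb⟩ := hA t hts
        refine ⟨b, ?_⟩
        simp only [List.get_eq_getElem] at hb ⊢
        rw [List.getElem_take]
        exact hb
      have := Finset.card_le_card_of_surjOn _ hsurj
      rw [Finset.card_erase_of_mem hjs] at this
      omega
    have hs'le : s'.card ≤ (l.take (j : ℕ)).length := by
      simpa using Finset.card_le_univ s'
    have hcmem : lnc (inl g) (l.take (j : ℕ)) ∈ gammaGA φ i := by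
      rw [gammaGA_eq]
      refine Subgroup.subset_closure ⟨g, l.take (j : ℕ), by omega,
        fun y hy => hmem y (List.take_subset _ _ hy),
        ⟨s', hs'card, fun t ht => (Finset.mem_filter.mp ht).2⟩, rfl⟩
    have hcommN : ⁅lnc (inl g) (l.take (j : ℕ)), (inr a : G ⋊[φ] A)⁆ ∈ N := by
      refine hKle 0 ?_
      rw [hK0]
      exact Subgroup.commutator_mem_commutator hcmem (hAstar a)
    have hsplit : lnc (inl g) l =
        lnc ⁅lnc (inl g) (l.take (j : ℕ)), (inr a : G ⋊[φ] A)⁆ (l.drop ((j : ℕ) + 1)) := by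
      conv_lhs => rw [← List.take_append_drop (j : ℕ) l,
        List.drop_eq_getElem_cons hjlen]
      rw [lnc_append, lnc_cons]
      have : l[(j : ℕ)] = inr a := by
        simpa [List.get_eq_getElem] using hja
      rw [this]
    rw [hsplit]
    exact lnc_mem_of_normal hNnormal hcommN _
  · -- easy direction
    refine iSup_le ?_
    intro n
    induction n with
    | zero =>
      rw [hK0, Subgroup.commutator_le]
      rintro x hx _ ⟨a, -, rfl⟩
      exact comm_inr_succ hx a
    | succ n ih =>
      rw [hKs]
      haveI := gammaGA_normal (φ := φ) (i + 1)
      exact le_trans (Subgroup.commutator_mono ih le_top)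
        (Subgroup.commutator_le_left _ _)

end Aux

theorem stmt1 {G A : Type*} [Group G] [Group A] [Finite G] (φ : A →* MulAut G)
    (i : ℕ) (hi : 1 ≤ i) :
    gammaGA φ (i + 1) =
      ⨆ n : ℕ,
        Nat.rec (motive := fun _ => Subgroup (G ⋊[φ] A))
          ⁅gammaGA φ i, (⊤ : Subgroup A).map (inr : A →* G ⋊[φ] A)⁆
          (fun _ H => ⁅H, (⊤ : Subgroup G).map (inl : G →* G ⋊[φ] A)⁆) n := by
  exact main_aux i hi _ rfl (fun _ => rfl)
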